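/- Let R : ℝ^n → ℝ^n be continuously differentiable and suppose there exists μ > 0 such that for every u ∈ ℝ^n, the Jacobian DR(u) is invertible with ‖DR(u)⁻¹‖ ≤ 1/μ. Then R is a bijection from ℝ^n to ℝ^n; in particular, there exists a unique u with R(u) = 0. -/

import Mathlib

open Set Filter Topology NNReal
section
variable {E : Type*} [NormedAddCommGroup E] [NormedSpace ℝ E] [CompleteSpace E]
variable {R : E → E} {μ : ℝ}

/-- Lifting of straight segments. -/
lemma hadamard_lift_exists (hμ : 0 < μ)
    (D : E → E ≃L[ℝ] E) (hD : ∀ u, HasStrictFDerivAt R (D u : E →L[ℝ] E) u)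
    (hDn : ∀ u, ‖((D u).symm : E →L[ℝ] E)‖ ≤ 1 / μ) (a y : E) :
    ∃ g : ℝ → E, Continuous g ∧ g 0 = a ∧
      ∀ t ∈ Icc (0:ℝ) 1, R (g t) = R a + t • (y - R a) := by
  have hRc : Continuous R := continuous_iff_continuousAt.2 fun u => (hD u).continuousAt
  set v : E := y - R a with hv
  set p : ℝ → E := fun t => R a + t • v with hp
  have hpc : Continuous p := by fun_prop
  have hp0 : p 0 = R a := by simp [hp]
  set C : ℝ≥0 := Real.toNNReal (‖v‖ / μ) with hC
  have hCcoe : (C : ℝ) = ‖v‖ / μ := Real.coe_toNNReal _ (by positivity)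
  -- derivative of a local section composed with p
  have key : ∀ u : E, ∀ t : ℝ, p t ∈ ((hD u).toOpenPartialHomeomorph R).target →
      HasDerivAt (fun t' => ((hD u).toOpenPartialHomeomorph R).symm (p t'))
        ((D (((hD u).toOpenPartialHomeomorph R).symm (p t))).symm v) t := by
    intro u t hz
    set c := (hD u).toOpenPartialHomeomorph R
    have h1 : HasFDerivAt c.symm ((D (c.symm (p t))).symm : E →L[ℝ] E) (p t) :=
      HasFDerivAt.of_local_left_inverse (c.continuousAt_symm hz)
        (hD (c.symm (p t))).hasFDerivAt ((c.eventually_right_inverse hz).mono fun y hy => hy)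
    have h2 : HasDerivAt p v t := by
      have := (((hasDerivAt_id t).smul_const v).const_add (R a)); rw [one_smul] at this; exact this
    exact h1.comp_hasDerivAt t h2
  have keybound : ∀ u : E, ‖((D u).symm : E →L[ℝ] E) v‖₊ ≤ C := by
    intro u
    rw [← NNReal.coe_le_coe, coe_nnnorm, hCcoe]
    calc ‖((D u).symm : E →L[ℝ] E) v‖ ≤ ‖((D u).symm : E →L[ℝ] E)‖ * ‖v‖ :=
          ContinuousLinearMap.le_opNorm _ _
      _ ≤ (1/μ) * ‖v‖ := by
          exact mul_le_mul_of_nonneg_right (hDn u) (norm_nonneg v)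
      _ = ‖v‖ / μ := by ring
  set A : Set ℝ := {T | T ∈ Icc (0:ℝ) 1 ∧ ∃ g : ℝ → E, g 0 = a ∧
      LipschitzOnWith C g (Icc 0 T) ∧ ∀ t ∈ Icc (0:ℝ) T, R (g t) = p t} with hA
  have h0A : (0:ℝ) ∈ A := by
    refine ⟨⟨le_refl 0, zero_le_one⟩, fun _ => a, rfl, ((LipschitzWith.const a).weaken (by positivity : (0:ℝ≥0) ≤ C)).lipschitzOnWith, ?_⟩
    intro t ht
    rw [mem_Icc] at ht
    have : t = 0 := le_antisymm ht.2 ht.1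
    simp [this, hp0]
  have hbdd : BddAbove A := ⟨1, fun T hT => hT.1.2⟩
  have hne : A.Nonempty := ⟨0, h0A⟩
  -- downward closed
  have hdc : ∀ T ∈ A, ∀ t ∈ Icc (0:ℝ) T, t ∈ A := by
    rintro T ⟨hT1, g, hg0, hgl, hgp⟩ t ht
    rw [mem_Icc] at ht
    exact ⟨⟨ht.1, le_trans ht.2 hT1.2⟩, g, hg0, hgl.mono (Icc_subset_Icc le_rfl ht.2),
      fun s hs => hgp s ⟨hs.1, le_trans hs.2 ht.2⟩⟩
  set T₀ := sSup A with hT₀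
  have hT₀0 : 0 ≤ T₀ := le_csSup hbdd h0A
  have hT₀1 : T₀ ≤ 1 := csSup_le hne fun T hT => hT.1.2
  -- uniqueness of lifts
  have sep : IsSeparatedMap R := T2Space.isSeparatedMap R
  have locinj : IsLocallyInjective R :=
    (IsLocalHomeomorph.mk _ fun x => ⟨(hD x).toOpenPartialHomeomorph R,
      (hD x).mem_toOpenPartialHomeomorph_source, fun _ _ => rfl⟩).isLocallyInjective
  have uniq : ∀ (g₁ g₂ : ℝ → E) (T : ℝ), ContinuousOn g₁ (Icc 0 T) → ContinuousOn g₂ (Icc 0 T) →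
      (∀ t ∈ Icc (0:ℝ) T, R (g₁ t) = R (g₂ t)) → g₁ 0 = g₂ 0 →
      ∀ t ∈ Icc (0:ℝ) T, g₁ t = g₂ t := by
    intro g₁ g₂ T h1 h2 he h0 t ht
    rcases le_or_gt T 0 with h | h
    · have : t = 0 := le_antisymm (ht.2.trans h) ht.1
      rw [this]; exact h0
    · exact sep.eqOn_of_comp_eqOn locinj isPreconnected_Icc h1 h2 (fun s hs => he s hs)
        (⟨le_refl 0, le_of_lt h⟩ : (0:ℝ) ∈ Icc 0 T) h0 ht
  -- Step 1 : T₀ ∈ A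
  have step1 : T₀ ∈ A := by
    by_cases hc : T₀ ∈ A
    · exact hc
    exfalso
    have hlt : ∀ t, 0 ≤ t → t < T₀ → t ∈ A := by
      intro t h1 h2
      obtain ⟨T, hTA, htT⟩ := exists_lt_of_lt_csSup hne h2
      exact hdc T hTA t ⟨h1, le_of_lt htT⟩
    have hT₀pos : 0 < T₀ := by
      rcases eq_or_lt_of_le hT₀0 with h | h
      · exact absurd (h ▸ h0A) hc
      · exact h
    classical
    set g : ℝ → E := fun t => if h : t ∈ A then Classical.choose h.2 t else a with hg
    have hgagree : ∀ T (hT : T ∈ A), ∀ t ∈ Icc (0:ℝ) T, g t = Classical.choose hT.2 t := by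
      intro T hT t ht
      have htA : t ∈ A := hdc T hT t ht
      rw [hg]; simp only [dif_pos htA]
      obtain ⟨h10, h1l, h1p⟩ := Classical.choose_spec htA.2
      obtain ⟨h20, h2l, h2p⟩ := Classical.choose_spec hT.2
      exact uniq _ _ t (h1l.continuousOn) ((h2l.mono (Icc_subset_Icc le_rfl ht.2)).continuousOn)
        (fun s hs => by rw [h1p s hs, h2p s ⟨hs.1, hs.2.trans ht.2⟩])
        (by rw [h10, h20]) t ⟨ht.1, le_refl t⟩
    have hg0 : g 0 = a := by
      rw [hgagree 0 h0A 0 ⟨le_refl 0, le_refl 0⟩, (Classical.choose_spec h0A.2).1]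
    have hglift : ∀ t ∈ A, R (g t) = p t := by
      intro t ht
      rw [hgagree t ht t ⟨ht.1.1, le_refl t⟩]
      exact (Classical.choose_spec ht.2).2.2 t ⟨ht.1.1, le_refl t⟩
    have hglipA : ∀ s ∈ A, ∀ t ∈ A, dist (g s) (g t) ≤ C * dist s t := by
      have key : ∀ s ∈ A, ∀ t ∈ A, s ≤ t → dist (g s) (g t) ≤ C * dist s t := by
        intro s hs t ht hst
        obtain ⟨h20, h2l, h2p⟩ := Classical.choose_spec ht.2
        rw [hgagree t ht s ⟨hs.1.1, hst⟩, hgagree t ht t ⟨ht.1.1, le_refl t⟩]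
        exact h2l.dist_le_mul s ⟨hs.1.1, hst⟩ t ⟨ht.1.1, le_refl t⟩
      intro s hs t ht
      rcases le_total s t with h | h
      · exact key s hs t ht h
      · rw [dist_comm (g s), dist_comm s]; exact key t ht s hs h
    -- the approximating sequence
    set u : ℕ → ℝ := fun n => T₀ - T₀ / (n + 1) with hu
    have huA : ∀ n, u n ∈ A := by
      intro n
      apply hlt
      · rw [hu]; simp only [sub_nonneg]
        apply div_le_self (le_of_lt hT₀pos)
        exact_mod_cast Nat.le_add_left 1 n
      · rw [hu]; simp only [sub_lt_self_iff]
        positivity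
    have hseq : Tendsto (fun n : ℕ => T₀ / (↑n + 1)) atTop (𝓝 0) := by
      simpa [div_eq_mul_one_div T₀] using tendsto_one_div_add_atTop_nhds_zero_nat.const_mul T₀
    have hulim : Tendsto u atTop (𝓝 T₀) := by
      rw [hu]
      simpa using (tendsto_const_nhds (x := T₀)).sub hseq
    have hcauchy : CauchySeq (fun n => g (u n)) := by
      refine cauchySeq_of_le_tendsto_0 (fun N => (C:ℝ) * (T₀ / (N + 1))) ?_ ?_
      · intro n m N hn hm
        calc dist (g (u n)) (g (u m)) ≤ C * dist (u n) (u m) := hglipA _ (huA n) _ (huA m)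
          _ ≤ C * (T₀ / (N+1)) := by
              apply mul_le_mul_of_nonneg_left _ (C.coe_nonneg)
              rw [hu, Real.dist_eq]
              have h1 : ∀ j : ℕ, N ≤ j → T₀ / (j+1) ≤ T₀ / (N+1) := by
                intro j hj
                apply div_le_div_of_nonneg_left (le_of_lt hT₀pos) (by positivity)
                exact_mod_cast Nat.succ_le_succ hj
              have h2 : ∀ j : ℕ, 0 ≤ T₀ / (j+1) := fun j => by positivity
              rw [abs_le]
              constructor <;> simp only [sub_sub_sub_cancel_left] <;>
                [skip; skip] <;> nlinarith [h1 n hn, h1 m hm, h2 n, h2 m]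
      · simpa using hseq.const_mul (C:ℝ)
    obtain ⟨b, hb⟩ := cauchySeq_tendsto_of_complete hcauchy
    set g' : ℝ → E := fun t => if t = T₀ then b else g t with hg'
    apply hc
    refine ⟨⟨hT₀0, hT₀1⟩, g', ?_, ?_, ?_⟩
    · rw [hg']; simp only [if_neg (ne_of_lt hT₀pos)]; exact hg0
    · -- Lipschitz
      rw [lipschitzOnWith_iff_dist_le_mul]
      have key : ∀ s ∈ Icc (0:ℝ) T₀, ∀ t ∈ Icc (0:ℝ) T₀, s ≤ t →
          dist (g' s) (g' t) ≤ C * dist s t := by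
        intro s hs t ht hst
        rcases eq_or_lt_of_le ht.2 with h2 | h2
        · rcases eq_or_lt_of_le hst with h1 | h1
          · simp [h1]
          · -- t = T₀, s < T₀
            have hsA : s ∈ A := hlt s hs.1 (h1.trans_le ht.2)
            have hg's : g' s = g s := by rw [hg']; simp [ne_of_lt (h1.trans_eq h2)]
            have hg't : g' t = b := by rw [hg']; simp [h2]
            rw [hg's, hg't]
            have l1 : Tendsto (fun n => dist (g s) (g (u n))) atTop (𝓝 (dist (g s) b)) :=
              (tendsto_const_nhds.dist hb)
            have l2 : Tendsto (fun n => (C:ℝ) * dist s (u n)) atTop (𝓝 ((C:ℝ) * dist s t)) := by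
              rw [h2]
              exact (tendsto_const_nhds.dist hulim).const_mul _
            exact le_of_tendsto_of_tendsto' l1 l2 fun n => hglipA _ hsA _ (huA n)
        · -- t < T₀ hence s,t ∈ A
          have hsA : s ∈ A := hlt s hs.1 (hst.trans_lt h2)
          have htA : t ∈ A := hlt t ht.1 h2
          have hg's : g' s = g s := by rw [hg']; simp [ne_of_lt (hst.trans_lt h2)]
          have hg't : g' t = g t := by rw [hg']; simp [ne_of_lt h2]
          rw [hg's, hg't]
          exact hglipA _ hsA _ htA
      intro s hs t ht
      rcases le_total s t with h | h
      · exact key s hs t ht h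
      · rw [dist_comm (g' s), dist_comm s]; exact key t ht s hs h
    · -- lift property
      intro t ht
      rcases eq_or_lt_of_le ht.2 with h2 | h2
      · rw [hg']; simp only [if_pos h2]
        have l1 : Tendsto (fun n => R (g (u n))) atTop (𝓝 (R b)) := (hRc.continuousAt.tendsto.comp hb)
        have l2 : Tendsto (fun n => R (g (u n))) atTop (𝓝 (p T₀)) := by
          have : ∀ n, R (g (u n)) = p (u n) := fun n => hglift _ (huA n)
          rw [funext this]
          exact (hpc.continuousAt.tendsto.comp hulim)
        rw [h2]
        exact tendsto_nhds_unique l1 l2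
      · have htA : t ∈ A := hlt t ht.1 h2
        rw [hg']; simp only [if_neg (ne_of_lt h2)]
        exact hglift t htA
  -- Step 2 : 1 ∈ A
  have step2 : (1:ℝ) ∈ A := by
    rcases eq_or_lt_of_le hT₀1 with h1 | h1
    · exact h1 ▸ step1
    exfalso
    obtain ⟨_, g, hg0, hglip, hglift⟩ := step1
    set x₀ := g T₀ with hx₀
    have hT₀Icc : T₀ ∈ Icc (0:ℝ) T₀ := ⟨hT₀0, le_refl _⟩
    have hRx₀ : R x₀ = p T₀ := hglift T₀ hT₀Icc
    set c := (hD x₀).toOpenPartialHomeomorph R with hcdef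
    have hx₀s : x₀ ∈ c.source := (hD x₀).mem_toOpenPartialHomeomorph_source
    have hpT₀ : p T₀ ∈ c.target := by
      rw [← hRx₀]; exact c.map_source hx₀s
    have hW : IsOpen (p ⁻¹' c.target) := c.open_target.preimage hpc
    obtain ⟨δ, hδ0, hδ⟩ := Metric.isOpen_iff.1 hW T₀ hpT₀
    set ε := min (δ/2) ((1 - T₀)/2) with hε
    have hε0 : 0 < ε := lt_min (by positivity) (by linarith)
    set T₁ := T₀ + ε with hT₁
    have hT₁1 : T₁ ≤ 1 := by
      have : ε ≤ (1 - T₀)/2 := min_le_right _ _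
      rw [hT₁]; linarith
    have hmem : ∀ t ∈ Icc T₀ T₁, p t ∈ c.target := by
      intro t ht
      apply hδ
      rw [Metric.mem_ball, Real.dist_eq, abs_lt]
      have h2 : ε ≤ δ/2 := min_le_left _ _
      have h3 := ht.1
      have h4 := ht.2
      rw [hT₁] at h4
      constructor
      · linarith
      · linarith
    set φ : ℝ → E := fun t => c.symm (p t) with hφ
    have hφT₀ : φ T₀ = g T₀ := by
      show c.symm (p T₀) = g T₀
      rw [← hRx₀]
      exact c.left_inv hx₀s
    have hφlift : ∀ t ∈ Icc T₀ T₁, R (φ t) = p t := fun t ht => c.right_inv (hmem t ht)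
    have hφlip : LipschitzOnWith C φ (Icc T₀ T₁) :=
      (convex_Icc T₀ T₁).lipschitzOnWith_of_nnnorm_hasDerivWithin_le
        (f' := fun t => ((D (φ t)).symm : E →L[ℝ] E) v)
        (fun t ht => ((key x₀ t (hmem t ht)).hasDerivWithinAt))
        (fun t _ => keybound _)
    set h : ℝ → E := fun t => if t ≤ T₀ then g t else φ t with hh
    have hmain : T₁ ∈ A := by
      refine ⟨⟨by rw [hT₁]; linarith, hT₁1⟩, h, ?_, ?_, ?_⟩
      · rw [hh]; simp only [if_pos hT₀0]; exact hg0
      · rw [lipschitzOnWith_iff_dist_le_mul]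
        have key2 : ∀ s ∈ Icc (0:ℝ) T₁, ∀ t ∈ Icc (0:ℝ) T₁, s ≤ t →
            dist (h s) (h t) ≤ C * dist s t := by
          intro s hs t ht hst
          by_cases hs1 : s ≤ T₀ <;> by_cases ht1 : t ≤ T₀
          · rw [hh]; simp only [if_pos hs1, if_pos ht1]
            exact hglip.dist_le_mul s ⟨hs.1, hs1⟩ t ⟨ht.1, ht1⟩
          · push_neg at ht1
            rw [hh]; simp only [if_pos hs1, if_neg (not_le.2 ht1)]
            calc dist (g s) (φ t) ≤ dist (g s) (g T₀) + dist (φ T₀) (φ t) := by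
                  rw [hφT₀]; exact dist_triangle _ _ _
              _ ≤ C * dist s T₀ + C * dist T₀ t :=
                  add_le_add (hglip.dist_le_mul s ⟨hs.1, hs1⟩ T₀ hT₀Icc)
                    (hφlip.dist_le_mul T₀ ⟨le_refl _, by rw [hT₁]; linarith⟩
                      t ⟨le_of_lt ht1, ht.2⟩)
              _ ≤ C * dist s t := by
                  rw [Real.dist_eq, Real.dist_eq, Real.dist_eq,
                    abs_of_nonpos (by linarith), abs_of_nonpos (by linarith),
                    abs_of_nonpos (by linarith)]
                  ring_nf
                  rfl
          · exfalso; push_neg at hs1; exact hs1.not_ge (hst.trans ht1)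
          · push_neg at hs1 ht1
            rw [hh]; simp only [if_neg (not_le.2 hs1), if_neg (not_le.2 ht1)]
            exact hφlip.dist_le_mul s ⟨le_of_lt hs1, hs.2⟩ t ⟨le_of_lt ht1, ht.2⟩
        intro s hs t ht
        rcases le_total s t with hle | hle
        · exact key2 s hs t ht hle
        · rw [dist_comm (h s), dist_comm s]; exact key2 t ht s hs hle
      · intro t ht
        by_cases h1 : t ≤ T₀
        · rw [hh]; simp only [if_pos h1]; exact hglift t ⟨ht.1, h1⟩
        · push_neg at h1
          rw [hh]; simp only [if_neg (not_le.2 h1)]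
          exact hφlift t ⟨le_of_lt h1, ht.2⟩
    have hle := le_csSup hbdd hmain
    rw [← hT₀] at hle
    rw [hT₁] at hle
    linarith
  -- conclusion
  obtain ⟨_, g, hg0, hglip, hglift⟩ := step2
  set clamp : ℝ → ℝ := fun t => max 0 (min t 1) with hcl
  have hclcont : Continuous clamp := continuous_const.max (continuous_id.min continuous_const)
  have hclmem : ∀ t, clamp t ∈ Icc (0:ℝ) 1 :=
    fun t => ⟨le_max_left _ _, max_le zero_le_one (min_le_right _ _)⟩
  refine ⟨g ∘ clamp, hglip.continuousOn.comp_continuous hclcont hclmem, ?_, ?_⟩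
  · show g (clamp 0) = a
    have h0 : clamp 0 = 0 := by rw [hcl]; simp
    rw [h0, hg0]
  · intro t ht
    have heq : clamp t = t := by
      rw [hcl]; simp only []; rw [min_eq_left ht.2, max_eq_right ht.1]
    show R (g (clamp t)) = p t
    rw [heq]; exact hglift t ht

lemma hadamard_inj (hμ : 0 < μ) (D : E → E ≃L[ℝ] E)
    (hD : ∀ u, HasStrictFDerivAt R (D u : E →L[ℝ] E) u)
    (hDn : ∀ u, ‖((D u).symm : E →L[ℝ] E)‖ ≤ 1 / μ) :
    Function.Injective R := by
  intro a b hab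
  have hRc : Continuous R := continuous_iff_continuousAt.2 fun u => (hD u).continuousAt
  set y := R b with hy
  set γ : ℝ → E := fun s => a + s • (b - a) with hγ
  have hγc : Continuous γ := by fun_prop
  have hγ0 : γ 0 = a := by rw [hγ]; simp
  have hγ1 : γ 1 = b := by rw [hγ]; simp
  set q : ℝ → ℝ → E := fun s t => R (γ s) + t • (y - R (γ s)) with hq
  have hqc : Continuous fun z : ℝ × ℝ => q z.1 z.2 := by
    apply Continuous.add
    · exact (hRc.comp hγc).comp continuous_fst
    · exact continuous_snd.smul (continuous_const.sub ((hRc.comp hγc).comp continuous_fst))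
  have hqs : ∀ t : ℝ, Continuous fun s => q s t :=
    fun t => hqc.comp (continuous_id.prodMk continuous_const)
  have hlift : ∀ s : ℝ, ∃ g : ℝ → E, Continuous g ∧ g 0 = γ s ∧
      ∀ t ∈ Icc (0:ℝ) 1, R (g t) = q s t :=
    fun s => hadamard_lift_exists hμ D hD hDn (γ s) y
  classical
  set G : ℝ → ℝ → E := fun s => Classical.choose (hlift s) with hGdef
  have hGc : ∀ s, Continuous (G s) := fun s => (Classical.choose_spec (hlift s)).1
  have hG0 : ∀ s, G s 0 = γ s := fun s => (Classical.choose_spec (hlift s)).2.1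
  have hGl : ∀ s, ∀ t ∈ Icc (0:ℝ) 1, R (G s t) = q s t :=
    fun s => (Classical.choose_spec (hlift s)).2.2
  have sep : IsSeparatedMap R := T2Space.isSeparatedMap R
  have locinj : IsLocallyInjective R :=
    (IsLocalHomeomorph.mk _ fun x => ⟨(hD x).toOpenPartialHomeomorph R,
      (hD x).mem_toOpenPartialHomeomorph_source, fun _ _ => rfl⟩).isLocallyInjective
  -- continuity of the endpoint map
  have hcont : ∀ s₀ : ℝ, ContinuousAt (fun s => G s 1) s₀ := by
    intro s₀
    set g := G s₀ with hgdef
    have hcover : Icc (0:ℝ) 1 ⊆ ⋃ τ : ℝ, g ⁻¹' ((hD (g τ)).toOpenPartialHomeomorph R).source := by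
      intro x _
      exact mem_iUnion.2 ⟨x, (hD (g x)).mem_toOpenPartialHomeomorph_source⟩
    obtain ⟨δ, hδ0, hδ⟩ := lebesgue_number_lemma_of_metric isCompact_Icc
      (fun τ => ((hD (g τ)).toOpenPartialHomeomorph R).open_source.preimage (hGc s₀)) hcover
    obtain ⟨k', hk'⟩ := exists_nat_one_div_lt hδ0
    set k : ℕ := k' + 1 with hk
    have hkpos : (0:ℝ) < k := by rw [hk]; push_cast; positivity
    have hkδ : 1 / (k:ℝ) < δ := by rw [hk]; push_cast; exact_mod_cast hk'
    set T : ℕ → ℝ := fun i => i / k with hT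
    have hTmono : ∀ i : ℕ, T i ≤ T (i+1) := by
      intro i; rw [hT]; simp only []
      gcongr
      linarith
    have hTmem : ∀ i : ℕ, i ≤ k → T i ∈ Icc (0:ℝ) 1 := by
      intro i hi
      refine ⟨by positivity, ?_⟩
      rw [hT]; simp only []
      rw [div_le_one hkpos]
      exact_mod_cast hi
    have hTgap : ∀ i : ℕ, T (i+1) - T i = 1 / k := by
      intro i; rw [hT]; push_cast; ring
    have hseg : ∀ i : ℕ, i < k → ∃ u : E, ∀ t ∈ Icc (T i) (T (i+1)),
        g t ∈ ((hD u).toOpenPartialHomeomorph R).source := by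
      intro i hi
      obtain ⟨τ, hτ⟩ := hδ (T i) (hTmem i (le_of_lt hi))
      refine ⟨g τ, fun t ht => hτ ?_⟩
      rw [Metric.mem_ball, Real.dist_eq, abs_lt]
      have h1 := ht.1
      have h2 := ht.2
      have h3 := hTgap i
      constructor <;> linarith
    have main : ∀ i : ℕ, i ≤ k → ∃ w : ℝ → E, ContinuousAt w s₀ ∧ w s₀ = g (T i) ∧
        ∀ᶠ s in 𝓝 s₀, G s (T i) = w s ∧ R (w s) = q s (T i) := by
      intro i hik
      induction i with
      | zero =>
        have hT0 : T 0 = 0 := by rw [hT]; simp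
        refine ⟨γ, hγc.continuousAt, by rw [hT0]; exact (hG0 s₀).symm, ?_⟩
        filter_upwards with s
        refine ⟨by rw [hT0]; exact hG0 s, ?_⟩
        rw [hq, hT0]; simp
      | succ i ih =>
        have hik' : i < k := hik
        obtain ⟨w, hwc, hws₀, hwev⟩ := ih (le_of_lt hik')
        obtain ⟨u, hu⟩ := hseg i hik'
        set e := (hD u).toOpenPartialHomeomorph R with he
        have hecoe : (⇑e : E → E) = R := rfl
        have hTi : T i ∈ Icc (T i) (T (i+1)) := ⟨le_refl _, hTmono i⟩
        have hTi1 : T (i+1) ∈ Icc (T i) (T (i+1)) := ⟨hTmono i, le_refl _⟩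
        have hIcc01 : Icc (T i) (T (i+1)) ⊆ Icc (0:ℝ) 1 :=
          Icc_subset_Icc (hTmem i (le_of_lt hik')).1 (hTmem (i+1) hik).2
        have hq0 : ∀ t ∈ Icc (T i) (T (i+1)), q s₀ t = R (g t) :=
          fun t ht => (hGl s₀ t (hIcc01 ht)).symm
        have hq0t : ∀ t ∈ Icc (T i) (T (i+1)), q s₀ t ∈ e.target := by
          intro t ht
          rw [hq0 t ht]
          exact e.map_source (hu t ht)
        have E1 : ∀ᶠ s in 𝓝 s₀, ∀ t ∈ Icc (T i) (T (i+1)), q s t ∈ e.target := by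
          apply IsCompact.eventually_forall_of_forall_eventually isCompact_Icc
          intro t ht
          exact hqc.continuousAt.eventually_mem (e.open_target.mem_nhds (hq0t t ht))
        have hsymc : ∀ t ∈ Icc (T i) (T (i+1)), ContinuousAt (fun s => e.symm (q s t)) s₀ :=
          fun t ht => ContinuousAt.comp (e.continuousAt_symm (hq0t t ht))
            ((hqs t).continuousAt (x := s₀))
        have hsymval : ∀ t ∈ Icc (T i) (T (i+1)), e.symm (q s₀ t) = g t := by
          intro t ht
          rw [hq0 t ht]
          exact e.left_inv (hu t ht)
        have E3 : ∀ᶠ s in 𝓝 s₀, w s ∈ e.source := by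
          apply hwc.eventually_mem
          apply e.open_source.mem_nhds
          rw [hws₀]; exact hu _ hTi
        have E4 : ∀ᶠ s in 𝓝 s₀, e.symm (q s (T i)) ∈ e.source := by
          apply (hsymc _ hTi).eventually_mem
          apply e.open_source.mem_nhds
          rw [hsymval _ hTi]; exact hu _ hTi
        refine ⟨fun s => e.symm (q s (T (i+1))), hsymc _ hTi1, hsymval _ hTi1, ?_⟩
        filter_upwards [E1, E3, E4, hwev] with s h1 h3 h4 hw
        have knot : w s = e.symm (q s (T i)) := by
          apply e.injOn h3 h4
          show R (w s) = R (e.symm (q s (T i)))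
          rw [hw.2]
          exact (e.right_inv (h1 _ hTi)).symm
        have hqt : Continuous fun t => q s t :=
          (hqc.comp (continuous_const.prodMk continuous_id) : _)
        have hcont2 : ContinuousOn (fun t => e.symm (q s t)) (Icc (T i) (T (i+1))) :=
          e.continuousOn_symm.comp hqt.continuousOn fun t ht => h1 t ht
        have hcomp : Set.EqOn (R ∘ G s) (R ∘ fun t => e.symm (q s t)) (Icc (T i) (T (i+1))) := by
          intro t ht
          show R (G s t) = R (e.symm (q s t))
          rw [hGl s t (hIcc01 ht)]
          exact (e.right_inv (h1 t ht)).symm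
        have huniq : Set.EqOn (G s) (fun t => e.symm (q s t)) (Icc (T i) (T (i+1))) :=
          sep.eqOn_of_comp_eqOn locinj isPreconnected_Icc (hGc s).continuousOn
            hcont2 hcomp hTi (by show G s (T i) = e.symm (q s (T i)); rw [hw.1, knot])
        refine ⟨?_, ?_⟩
        · exact huniq hTi1
        · show R (e.symm (q s (T (i+1)))) = q s (T (i+1))
          exact e.right_inv (h1 _ hTi1)
    obtain ⟨w, hwc, _, hwev⟩ := main k (le_refl k)
    have hTk : T k = 1 := by rw [hT]; field_simp
    apply hwc.congr
    filter_upwards [hwev] with s hs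
    rw [← hTk]
    exact hs.1.symm
  set Efun : ℝ → E := fun s => G s 1 with hEf
  have hEc : Continuous Efun := continuous_iff_continuousAt.2 hcont
  have hEy : ∀ s, R (Efun s) = y := by
    intro s
    rw [hEf]; simp only []
    rw [hGl s 1 ⟨zero_le_one, le_refl 1⟩, hq]
    simp
  have h01 : Efun 0 = Efun 1 :=
    sep.const_of_comp locinj hEc (fun s s' => by rw [hEy, hEy]) 0 1
  have hconstlift : ∀ (s₀ : ℝ) (z : E), γ s₀ = z → R z = y → Efun s₀ = z := by
    intro s₀ z hz hRz
    have hcomp : Set.EqOn (R ∘ G s₀) (R ∘ fun _ => z) (Icc (0:ℝ) 1) := by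
      intro t ht
      show R (G s₀ t) = R z
      rw [hGl s₀ t ht]
      simp [hq, hz, hRz]
    have heqon : Set.EqOn (G s₀) (fun _ => z) (Icc (0:ℝ) 1) :=
      sep.eqOn_of_comp_eqOn locinj isPreconnected_Icc (hGc s₀).continuousOn
        continuousOn_const hcomp (⟨le_refl 0, zero_le_one⟩ : (0:ℝ) ∈ Icc 0 1)
        (by show G s₀ 0 = z; rw [hG0, hz])
    exact heqon ⟨zero_le_one, le_refl 1⟩
  have hE0 : Efun 0 = a := hconstlift 0 a hγ0 hab
  have hE1 : Efun 1 = b := hconstlift 1 b hγ1 rfl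
  rw [hE0, hE1] at h01
  exact h01


lemma hadamard_surj (hμ : 0 < μ) (D : E → E ≃L[ℝ] E)
    (hD : ∀ u, HasStrictFDerivAt R (D u : E →L[ℝ] E) u)
    (hDn : ∀ u, ‖((D u).symm : E →L[ℝ] E)‖ ≤ 1 / μ) :
    Function.Surjective R := by
  intro y
  obtain ⟨g, hgc, hg0, hgl⟩ := hadamard_lift_exists hμ D hD hDn (0 : E) y
  refine ⟨g 1, ?_⟩
  rw [hgl 1 ⟨zero_le_one, le_refl 1⟩]
  simp

end

/-- Hadamard's theorem: a C¹ map of ℝⁿ whose Jacobian is everywhere invertible with a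
uniform bound `‖DR(u)⁻¹‖ ≤ 1/μ` is a bijection; in particular R(u)=0 has a unique solution. -/
theorem hadamard_uniform_inverse_bijective (n : ℕ)
    (R : EuclideanSpace ℝ (Fin n) → EuclideanSpace ℝ (Fin n)) (μ : ℝ)
    (hμ : 0 < μ) (hR : ContDiff ℝ 1 R)
    (hinv : ∀ u, ∃ e : EuclideanSpace ℝ (Fin n) ≃L[ℝ] EuclideanSpace ℝ (Fin n),
      (e : EuclideanSpace ℝ (Fin n) →L[ℝ] EuclideanSpace ℝ (Fin n)) = fderiv ℝ R u ∧
      ‖(e.symm : EuclideanSpace ℝ (Fin n) →L[ℝ] EuclideanSpace ℝ (Fin n))‖ ≤ 1 / μ) :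
    Function.Bijective R ∧ ∃! u, R u = 0 := by
  classical
  set D : EuclideanSpace ℝ (Fin n) →
      (EuclideanSpace ℝ (Fin n) ≃L[ℝ] EuclideanSpace ℝ (Fin n)) :=
    fun u => (hinv u).choose with hDdef
  have hD1 : ∀ u, ((D u) : EuclideanSpace ℝ (Fin n) →L[ℝ] EuclideanSpace ℝ (Fin n)) =
      fderiv ℝ R u := fun u => (hinv u).choose_spec.1
  have hDn : ∀ u, ‖((D u).symm : EuclideanSpace ℝ (Fin n) →L[ℝ] EuclideanSpace ℝ (Fin n))‖ ≤
      1 / μ := fun u => (hinv u).choose_spec.2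
  have hDs : ∀ u, HasStrictFDerivAt R
      ((D u) : EuclideanSpace ℝ (Fin n) →L[ℝ] EuclideanSpace ℝ (Fin n)) u := by
    intro u
    rw [hD1 u]
    exact hR.contDiffAt.hasStrictFDerivAt one_ne_zero
  have hbij : Function.Bijective R :=
    ⟨hadamard_inj hμ D hDs hDn, hadamard_surj hμ D hDs hDn⟩
  refine ⟨hbij, ?_⟩
  obtain ⟨u, hu⟩ := hbij.2 0
  exact ⟨u, hu, fun v hv => hbij.1 (hv.trans hu.symm)⟩
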